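/- For all integers n, m ≥ 1, the product of the total groves of degrees n and m is the total grove of degree nm: Y_n × Y_m = Y_{nm}, where the total grove of degree n is the whole set Y_n regarded as a grove. -/

import Mathlib

/-- A planar binary tree: a leaf `|` or a grafting `x ∨ y`. -/
inductive PBT : Type
  | leaf : PBT
  | node : PBT → PBT → PBT
  deriving DecidableEq

namespace PBT

/-- The degree: number of internal vertices. -/
def deg : PBT → ℕ
  | leaf => 0
  | node l r => deg l + deg r + 1

/-- The set `Y n` of planar binary trees of degree `n`. -/
def Y (n : ℕ) : Set PBT := {t | t.deg = n}

/-- The `over` operation `x / y`. -/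
def overOp : PBT → PBT → PBT
  | x, leaf => x
  | x, node yl yr => node (overOp x yl) yr

/-- The `under` operation `x \ y`. -/
def under : PBT → PBT → PBT
  | leaf, y => y
  | node xl xr, y => node xl (under xr y)

/-- The Tamari order, generated by `(x ∨ y) ∨ z ≤ x ∨ (y ∨ z)` and compatibility
with grafting on both sides. -/
inductive tle : PBT → PBT → Prop
  | refl (x : PBT) : tle x x
  | trans {x y z : PBT} : tle x y → tle y z → tle x z
  | rotate (x y z : PBT) : tle (node (node x y) z) (node x (node y z))
  | node_left {x y : PBT} (z : PBT) : tle x y → tle (node x z) (node y z)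
  | node_right {x y : PBT} (z : PBT) : tle x y → tle (node z x) (node z y)

/-- The sum of two planar binary trees: the Tamari interval `[x/y, x\y]`
(a subset of `Y (deg x + deg y)`). -/
def sum (x y : PBT) : Set PBT := {z | tle (overOp x y) z ∧ tle z (under x y)}

/-- A grove of degree `n`: a nonempty subset of `Y n`. -/
def Grove (n : ℕ) (A : Set PBT) : Prop := A.Nonempty ∧ ∀ x ∈ A, x.deg = n

/-- The sum of groves. -/
def gsum (A B : Set PBT) : Set PBT := ⋃ x ∈ A, ⋃ y ∈ B, sum x y

/-- The reflection involution σ. -/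
def σ : PBT → PBT
  | leaf => leaf
  | node l r => node (σ r) (σ l)

/-- The left sum `x ⊣ y` of trees (with the conventions `x ⊣ | = {x}`, `| ⊣ y = {|}`). -/
def lsum : PBT → PBT → Set PBT
  | x, leaf => {x}
  | leaf, _ => {leaf}
  | node xl xr, y => (fun z => node xl z) '' sum xr y

/-- The right sum `x ⊢ y` of trees (with the conventions `| ⊢ y = {y}`, `x ⊢ | = {|}`). -/
def rsum : PBT → PBT → Set PBT
  | leaf, y => {y}
  | _, leaf => {leaf}
  | x, node yl yr => (fun z => node z yr) '' sum x yl

/-- Left sum of groves. -/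
def glsum (A B : Set PBT) : Set PBT := ⋃ x ∈ A, ⋃ y ∈ B, lsum x y

/-- Right sum of groves. -/
def grsum (A B : Set PBT) : Set PBT := ⋃ x ∈ A, ⋃ y ∈ B, rsum x y

/-- Multiplication of a tree by a grove:
`| × B = {|}` and `(xˡ ∨ xʳ) × B = ((xˡ × B) ⊢ B) ⊣ (xʳ × B)`.
(The conventions `{|} ⊢ B = B` and `A ⊣ {|} = A` are built into `rsum`/`lsum`.) -/
def tmul : PBT → Set PBT → Set PBT
  | leaf, _ => {leaf}
  | node l r, B => glsum (grsum (tmul l B) B) (tmul r B)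

/-- Multiplication of groves. -/
def gmul (A B : Set PBT) : Set PBT := ⋃ x ∈ A, tmul x B

-- basic lemmas
lemma over_leaf (x : PBT) : overOp x leaf = x := rfl

lemma over_node (x yl yr : PBT) : overOp x (node yl yr) = node (overOp x yl) yr := rfl

lemma under_leaf (x : PBT) : under x leaf = x := by
  induction x with
  | leaf => rfl
  | node l r ihl ihr => simp [under, ihr]

lemma deg_over (x y : PBT) : (overOp x y).deg = x.deg + y.deg := by
  induction y with
  | leaf => simp [overOp, deg]
  | node yl yr ihl ihr => simp [overOp, deg, ihl]; omega

lemma tle_deg {x y : PBT} (h : tle x y) : x.deg = y.deg := by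
  induction h with
  | refl => rfl
  | trans _ _ ih1 ih2 => omega
  | rotate a b c => simp [deg]; omega
  | node_left z _ ih => simp [deg]; omega
  | node_right z _ ih => simp [deg]; omega

lemma mem_sum_deg {x y z : PBT} (h : z ∈ sum x y) : z.deg = x.deg + y.deg := by
  have := tle_deg h.1
  rw [deg_over] at this
  omega

lemma tle_node_under (x u v : PBT) : tle (node (under x u) v) (under x (node u v)) := by
  induction x with
  | leaf => exact tle.refl _
  | node a b iha ihb =>
    simp only [under]
    exact tle.trans (tle.rotate a (under b u) v) (tle.node_right a ihb)

lemma tle_over_node (u v w : PBT) : tle (overOp (node u v) w) (node u (overOp v w)) := by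
  induction w with
  | leaf => exact tle.refl _
  | node wl wr ihl ihr =>
    simp only [overOp]
    exact tle.trans (tle.node_left wr ihl) (tle.rotate u (overOp v wl) wr)

lemma deg_eq_zero {t : PBT} (h : t.deg = 0) : t = leaf := by
  cases t with
  | leaf => rfl
  | node l r => simp [deg] at h

/-- Additivity: every tree of degree `a+b` lies in some interval `x + y`. -/
lemma add_surj : ∀ (t : PBT) (a b : ℕ), t.deg = a + b →
    ∃ x y : PBT, x.deg = a ∧ y.deg = b ∧ t ∈ sum x y := by
  intro t
  induction t with
  | leaf =>
    intro a b h
    simp [deg] at h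
    refine ⟨leaf, leaf, ?_, ?_, tle.refl _, tle.refl _⟩ <;> simp only [deg] <;> omega
  | node tl tr ihl ihr =>
    intro a b h
    simp only [deg] at h
    rcases Nat.eq_zero_or_pos b with hb | hb
    · subst hb
      exact ⟨node tl tr, leaf, by simp only [deg]; omega, rfl, by rw [over_leaf]; exact tle.refl _,
        by rw [under_leaf]; exact tle.refl _⟩
    rcases lt_or_ge tr.deg b with htr | htr
    · -- deg tr < b : split tl
      obtain ⟨x, yl, hx, hyl, h1, h2⟩ := ihl a (b - 1 - tr.deg) (by omega)
      refine ⟨x, node yl tr, hx, by simp only [deg]; omega, ?_, ?_⟩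
      · rw [over_node]
        exact tle.node_left tr h1
      · exact tle.trans (tle.node_left tr h2) (tle_node_under x yl tr)
    · -- deg tr ≥ b : split tr
      obtain ⟨xr, y, hxr, hy, h1, h2⟩ := ihr (tr.deg - b) b (by omega)
      refine ⟨node tl xr, y, by simp only [deg]; omega, hy, ?_, ?_⟩
      · exact tle.trans (tle_over_node tl xr y) (tle.node_right tl h1)
      · simp only [under]
        exact tle.node_right tl h2


-- equation lemmas
lemma lsum_leaf_right (x : PBT) : lsum x leaf = {x} := by cases x <;> rfl
lemma lsum_leaf_left (c d : PBT) : lsum leaf (node c d) = {leaf} := rfl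
lemma lsum_node (a b c d : PBT) :
    lsum (node a b) (node c d) = (fun z => node a z) '' sum b (node c d) := rfl

lemma rsum_leaf_left (y : PBT) : rsum leaf y = {y} := by cases y <;> rfl
lemma rsum_node (a b c d : PBT) :
    rsum (node a b) (node c d) = (fun z => node z d) '' sum (node a b) c := rfl

lemma tmul_leaf (B : Set PBT) : tmul leaf B = {leaf} := rfl
lemma tmul_node (l r : PBT) (B : Set PBT) :
    tmul (node l r) B = glsum (grsum (tmul l B) B) (tmul r B) := rfl

lemma mem_glsum {A B : Set PBT} {z : PBT} :
    z ∈ glsum A B ↔ ∃ x ∈ A, ∃ y ∈ B, z ∈ lsum x y := by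
  simp [glsum]

lemma mem_grsum {A B : Set PBT} {z : PBT} :
    z ∈ grsum A B ↔ ∃ x ∈ A, ∃ y ∈ B, z ∈ rsum x y := by
  simp [grsum]

lemma mem_gmul {A B : Set PBT} {z : PBT} :
    z ∈ gmul A B ↔ ∃ x ∈ A, z ∈ tmul x B := by
  simp [gmul]


/-- Degree lemma for `tmul`. -/
lemma tmul_deg {m : ℕ} (hm : 1 ≤ m) :
    ∀ x z : PBT, z ∈ tmul x (Y m) → z.deg = x.deg * m ∧ (x ≠ leaf → z ≠ leaf) := by
  intro x
  induction x with
  | leaf =>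
    intro z hz
    rw [tmul_leaf, Set.mem_singleton_iff] at hz
    subst hz
    simp [deg]
  | node l r ihl ihr =>
    intro z hz
    rw [tmul_node, mem_glsum] at hz
    obtain ⟨w, hw, v, hv, hzw⟩ := hz
    rw [mem_grsum] at hw
    obtain ⟨u, hu, y, hy, hwy⟩ := hw
    have hym : y.deg = m := hy
    have hwfact : w.deg = l.deg * m + m ∧ w ≠ leaf := by
      cases y with
      | leaf => simp [deg] at hym; omega
      | node yl yr =>
        have hyd : yl.deg + yr.deg + 1 = m := by simpa [deg] using hym
        cases u with
        | leaf =>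
          have hl : l = leaf := by
            by_contra hl
            exact ((ihl leaf hu).2 hl) rfl
          rw [rsum_leaf_left, Set.mem_singleton_iff] at hwy
          subst hwy; subst hl
          refine ⟨?_, by simp⟩
          simp [deg]; omega
        | node u1 u2 =>
          have hud : (node u1 u2).deg = l.deg * m := (ihl _ hu).1
          rw [rsum_node] at hwy
          obtain ⟨s, hs, rfl⟩ := hwy
          have hsd := mem_sum_deg hs
          refine ⟨?_, by simp⟩
          simp only [deg] at hud hsd ⊢
          omega
    obtain ⟨hwd, hwne⟩ := hwfact
    cases v with
    | leaf =>
      have hr : r = leaf := by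
        by_contra hr
        exact ((ihr leaf hv).2 hr) rfl
      rw [lsum_leaf_right, Set.mem_singleton_iff] at hzw
      subst hzw; subst hr
      have hexp : (node l leaf).deg * m = l.deg * m + m := by simp [deg]; ring
      exact ⟨by omega, fun _ => hwne⟩
    | node v1 v2 =>
      have hvd : (node v1 v2).deg = r.deg * m := (ihr _ hv).1
      cases w with
      | leaf => exact absurd rfl hwne
      | node wl wr =>
        rw [lsum_node] at hzw
        obtain ⟨s, hs, rfl⟩ := hzw
        have hsd := mem_sum_deg hs
        have hexp : (node l r).deg * m = l.deg * m + r.deg * m + m := by simp [deg]; ring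
        refine ⟨?_, fun _ => by simp⟩
        simp only [deg] at hsd hwd hvd hexp ⊢
        omega

/-- Surjectivity: every tree of degree `n * m` lies in `x × Y m` for some `x` of degree `n`. -/
lemma tmul_surj {m : ℕ} (hm : 1 ≤ m) :
    ∀ n t, t.deg = n * m → ∃ x, x.deg = n ∧ t ∈ tmul x (Y m) := by
  intro n
  induction n using Nat.strong_induction_on with
  | _ n ih =>
    intro t ht
    match n, ih, ht with
    | 0, ih, ht =>
      have : t = leaf := deg_eq_zero (by simpa using ht)
      subst this
      exact ⟨leaf, rfl, rfl⟩
    | K+1, ih, ht =>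
      have hpos : 1 ≤ (K+1) * m := Nat.mul_pos (Nat.succ_pos K) hm
      cases t with
      | leaf => simp [deg] at ht; omega
      | node tl tr =>
        have hdeg : tl.deg + tr.deg + 1 = (K+1) * m := by simpa [deg] using ht
        have hexp : (K+1) * m = K * m + m := by ring
        match K with
        | 0 =>
          refine ⟨node leaf leaf, by simp [deg], ?_⟩
          rw [tmul_node, tmul_leaf, mem_glsum]
          refine ⟨node tl tr, ?_, leaf, rfl, by rw [lsum_leaf_right]; rfl⟩
          rw [mem_grsum]
          exact ⟨leaf, rfl, node tl tr, by show (node tl tr).deg = m; simp only [deg]; omega,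
            by rw [rsum_leaf_left]; rfl⟩
        | K'+1 =>
          set K := K' + 1 with hK
          rcases lt_or_ge tr.deg m with htr | htr
          · -- Case A : deg tr < m
            obtain ⟨u, yl, hu, hyl, htl'⟩ := add_surj tl (K * m) (m - 1 - tr.deg) (by omega)
            have hupos : 1 ≤ K * m := Nat.mul_pos (Nat.succ_pos K') hm
            obtain ⟨x', hx', hu'⟩ := ih K (by omega) u hu
            cases u with
            | leaf => simp [deg] at hu; omega
            | node u1 u2 =>
              refine ⟨node x' leaf, by simp [deg]; omega, ?_⟩
              rw [tmul_node, tmul_leaf, mem_glsum]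
              refine ⟨node tl tr, ?_, leaf, rfl, by rw [lsum_leaf_right]; rfl⟩
              rw [mem_grsum]
              refine ⟨node u1 u2, hu', node yl tr, ?_, ?_⟩
              · show (node yl tr).deg = m
                simp only [deg]; omega
              · rw [rsum_node]
                exact ⟨tl, htl', rfl⟩
          · -- Case B : deg tr ≥ m
            obtain ⟨i, p, hp, hdm⟩ : ∃ i p, p < m ∧ tl.deg = i * m + p :=
              ⟨tl.deg / m, tl.deg % m, Nat.mod_lt _ (by omega),
                by rw [mul_comm]; exact (Nat.div_add_mod tl.deg m).symm⟩
            have hiK : i < K := by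
              have h1 : i * m < K * m := by omega
              exact lt_of_mul_lt_mul_right h1 (Nat.zero_le m)
            obtain ⟨j, hij⟩ : ∃ j, i + j = K := ⟨K - i, by omega⟩
            have hj : 1 ≤ j := by omega
            have hKm : K * m = i * m + j * m := by rw [← hij]; ring
            have hjpos : 1 ≤ j * m := Nat.mul_pos hj hm
            obtain ⟨wr, v, hwr, hv, htr'⟩ := add_surj tr (m - 1 - p) (j * m) (by omega)
            obtain ⟨xr, hxr, hvm⟩ := ih j (by omega) v hv
            cases v with
            | leaf => simp [deg] at hv; omega
            | node v1 v2 =>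
              rcases Nat.eq_zero_or_pos i with hi0 | hi0
              · -- i = 0
                have him : i * m = 0 := by rw [hi0, zero_mul]
                refine ⟨node leaf xr, by simp [deg]; omega, ?_⟩
                rw [tmul_node, tmul_leaf, mem_glsum]
                refine ⟨node tl wr, ?_, node v1 v2, hvm, ?_⟩
                · rw [mem_grsum]
                  exact ⟨leaf, rfl, node tl wr,
                    by show (node tl wr).deg = m; simp only [deg]; omega,
                    by rw [rsum_leaf_left]; rfl⟩
                · rw [lsum_node]
                  exact ⟨tr, htr', rfl⟩
              · -- i ≥ 1
                have hipos : 1 ≤ i * m := Nat.mul_pos hi0 hm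
                obtain ⟨u, yl, hu, hyl, htl'⟩ := add_surj tl (i * m) p hdm
                obtain ⟨xl, hxl, hum⟩ := ih i (by omega) u hu
                cases u with
                | leaf => simp [deg] at hu; omega
                | node u1 u2 =>
                  refine ⟨node xl xr, by simp [deg]; omega, ?_⟩
                  rw [tmul_node, mem_glsum]
                  refine ⟨node tl wr, ?_, node v1 v2, hvm, ?_⟩
                  · rw [mem_grsum]
                    refine ⟨node u1 u2, hum, node yl wr, ?_, ?_⟩
                    · show (node yl wr).deg = m
                      simp only [deg]; omega
                    · rw [rsum_node]
                      exact ⟨tl, htl', rfl⟩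
                  · rw [lsum_node]
                    exact ⟨tr, htr', rfl⟩

end PBT

open PBT in
/-- `Y_n × Y_m = Y_{nm}` for `n, m ≥ 1`. -/
theorem total_grove_mul (n m : ℕ) (hn : 1 ≤ n) (hm : 1 ≤ m) :
    gmul (Y n) (Y m) = Y (n * m) := by
  ext z
  constructor
  · intro hz
    rw [mem_gmul] at hz
    obtain ⟨x, hx, hzx⟩ := hz
    have hxd : x.deg = n := hx
    have := (tmul_deg hm x z hzx).1
    show z.deg = n * m
    rw [this, hxd]
  · intro hz
    obtain ⟨x, hx, hzx⟩ := tmul_surj hm n z hz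
    rw [mem_gmul]
    exact ⟨x, hx, hzx⟩
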